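/- Let G = (V, A) be a finite directed graph with strictly increasing odd potential functions Φ_a, and let (q, π) be a potential-based flow. Let C be a cycle in the underlying undirected graph with forward arcs C₁ and backward arcs C₂, and for each arc a let y_a ∈ {0,1} be a direction indicator consistent with the flow (y_a = 1 implies q_a ≥ 0 and y_a = 0 implies q_a ≤ 0). If all flows on the cycle arcs are nonzero, then both acyclic inequalities ∑_{a∈C₁} y_a + ∑_{a∈C₂}(1−y_a) ≤ |C| − 1 and ∑_{a∈C₁}(1−y_a) + ∑_{a∈C₂} y_a ≤ |C| − 1 hold. -/

import Mathlib

open Fin.NatCast in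
lemma fin_telescope {n : ℕ} (g : Fin (n+1) → ℝ) :
    ∑ i : Fin n, (g i.castSucc - g i.succ) = g 0 - g (Fin.last n) := by
  have c1 : ∀ i : Fin n, (((i : ℕ) : Fin (n+1))) = i.castSucc := fun i => by
    ext; simp [Fin.val_cast_of_lt (by omega : (i:ℕ) < n+1)]
  have c2 : ∀ i : Fin n, ((((i : ℕ)+1 : ℕ) : Fin (n+1))) = i.succ := fun i => by
    ext; simp [Fin.val_cast_of_lt (by omega : (i:ℕ)+1 < n+1)]
  have h0 : ((0:ℕ) : Fin (n+1)) = 0 := by simp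
  have hlast : ((n:ℕ) : Fin (n+1)) = Fin.last n := by
    ext; simp [Fin.val_cast_of_lt (Nat.lt_succ_self n)]
  calc ∑ i : Fin n, (g i.castSucc - g i.succ)
      = ∑ i : Fin n, (g (((i:ℕ) : Fin (n+1))) - g ((((i:ℕ)+1 : ℕ) : Fin (n+1)))) :=
        Finset.sum_congr rfl fun i _ => by rw [c1, c2]
    _ = ∑ i ∈ Finset.range n, (g ((i : ℕ) : Fin (n+1)) - g (((i+1 : ℕ)) : Fin (n+1))) :=
        Fin.sum_univ_eq_sum_range (fun j : ℕ => g (j : Fin (n+1)) - g ((j+1 : ℕ) : Fin (n+1))) n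
    _ = g ((0:ℕ) : Fin (n+1)) - g ((n : ℕ) : Fin (n+1)) :=
        Finset.sum_range_sub' (fun j : ℕ => g (j : Fin (n+1))) n
    _ = g 0 - g (Fin.last n) := by rw [h0, hlast]

/-- The acyclic inequalities for flow-direction variables are valid for
potential-based flows: along any cycle of the underlying undirected graph all
of whose arcs carry nonzero flow, the direction variables cannot all agree
with either traversal orientation. -/
theorem acyclic_inequalities_valid {V A : Type} [Fintype V] [Fintype A]
    (src tgt : A → V) (Φ : A → ℝ → ℝ)
    (hmono : ∀ a, StrictMono (Φ a)) (hodd : ∀ a (x : ℝ), Φ a (-x) = -Φ a x)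
    (q : A → ℝ) (π : V → ℝ)
    (hcoup : ∀ a : A, π (src a) - π (tgt a) = Φ a (q a))
    (y : A → ℝ) (hy01 : ∀ a, y a = 0 ∨ y a = 1)
    (hydir : ∀ a : A, (0 < q a → y a = 1) ∧ (q a < 0 → y a = 0))
    (n : ℕ) (hn : 0 < n) (w : Fin (n + 1) → V) (e : Fin n → A)
    (dir : Fin n → Bool)
    (hclosed : w (Fin.last n) = w 0)
    (hwalk : ∀ i : Fin n,
      if dir i = true then src (e i) = w i.castSucc ∧ tgt (e i) = w i.succ
      else src (e i) = w i.succ ∧ tgt (e i) = w i.castSucc)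
    (hnz : ∀ i : Fin n, q (e i) ≠ 0) :
    (∑ i : Fin n, if dir i = true then y (e i) else 1 - y (e i)) ≤ (n : ℝ) - 1 ∧
    (∑ i : Fin n, if dir i = true then 1 - y (e i) else y (e i)) ≤ (n : ℝ) - 1 := by
  have hΦ0 : ∀ a, Φ a 0 = 0 := fun a => by
    have := hodd a 0; simp at this; linarith
  -- signed potential differences
  set s : Fin n → ℝ := fun i =>
    if dir i = true then Φ (e i) (q (e i)) else - Φ (e i) (q (e i)) with hs
  have s_eq : ∀ i : Fin n, s i = π (w i.castSucc) - π (w i.succ) := by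
    intro i
    have h := hwalk i
    by_cases hd : dir i = true
    · simp only [hd, if_true] at h
      simp only [hs, hd, if_true, ← h.1, ← h.2, hcoup]
    · simp only [hd, if_false, Bool.false_eq_true] at h
      simp only [hs, hd, if_false, Bool.false_eq_true]
      rw [← h.1, ← h.2, ← hcoup]
      ring
  have tele : ∑ i : Fin n, s i = 0 := by
    have h1 : ∑ i : Fin n, s i = π (w 0) - π (w (Fin.last n)) :=
      (Finset.sum_congr rfl fun i _ => s_eq i).trans (fin_telescope fun j => π (w j))
    rw [h1, hclosed, sub_self]
  have hne : (Finset.univ : Finset (Fin n)).Nonempty := by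
    exact Finset.univ_nonempty_iff.mpr (Fin.pos_iff_nonempty.mp hn)
  -- a generic bound: if term j = 0 and all terms ≤ 1, sum ≤ n - 1
  have bound : ∀ (t : Fin n → ℝ), (∀ i, t i ≤ 1) → (∃ j, t j = 0) →
      ∑ i : Fin n, t i ≤ (n : ℝ) - 1 := by
    intro t ht ⟨j, hj⟩
    have := Finset.sum_le_card_nsmul (Finset.univ.erase j) t 1
      (fun i _ => ht i)
    have hcard : (Finset.univ.erase j).card = n - 1 := by
      rw [Finset.card_erase_of_mem (Finset.mem_univ j)]; simp
    rw [hcard, nsmul_eq_mul, mul_one] at this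
    have hsplit : ∑ i : Fin n, t i = t j + ∑ i ∈ Finset.univ.erase j, t i :=
      (Finset.add_sum_erase _ _ (Finset.mem_univ j)).symm
    have hcast : ((n - 1 : ℕ) : ℝ) = (n : ℝ) - 1 := by
      have : 1 ≤ n := hn
      push_cast [this]; ring
    rw [hsplit, hj, zero_add]
    rw [hcast] at this
    exact this
  constructor
  · -- some s j ≤ 0
    have ⟨j, hj⟩ : ∃ j : Fin n, s j ≤ 0 := by
      by_contra h
      push_neg at h
      have := Finset.sum_pos (fun i _ => h i) hne
      linarith [tele]
    refine bound _ (fun i => ?_) ⟨j, ?_⟩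
    · rcases hy01 (e i) with h | h <;> by_cases hd : dir i = true <;>
        simp [hd, h]
    · by_cases hd : dir j = true
      · simp only [hs, hd, if_true] at hj
        have hq : q (e j) < 0 := by
          rcases lt_trichotomy (q (e j)) 0 with h | h | h
          · exact h
          · exact absurd h (hnz j)
          · exfalso
            have := hmono (e j) h
            rw [hΦ0] at this; linarith
        simp [hd, (hydir (e j)).2 hq]
      · simp only [hs, hd, if_false, Bool.false_eq_true] at hj
        have hq : 0 < q (e j) := by
          rcases lt_trichotomy (q (e j)) 0 with h | h | h
          · exfalso
            have := hmono (e j) h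
            rw [hΦ0] at this; linarith
          · exact absurd h (hnz j)
          · exact h
        simp [hd, (hydir (e j)).1 hq]
  · -- some s j ≥ 0
    have ⟨j, hj⟩ : ∃ j : Fin n, 0 ≤ s j := by
      by_contra h
      push_neg at h
      have := Finset.sum_neg (fun i _ => h i) hne
      linarith [tele]
    refine bound _ (fun i => ?_) ⟨j, ?_⟩
    · rcases hy01 (e i) with h | h <;> by_cases hd : dir i = true <;>
        simp [hd, h]
    · by_cases hd : dir j = true
      · simp only [hs, hd, if_true] at hj
        have hq : 0 < q (e j) := by
          rcases lt_trichotomy (q (e j)) 0 with h | h | h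
          · exfalso
            have := hmono (e j) h
            rw [hΦ0] at this; linarith
          · exact absurd h (hnz j)
          · exact h
        simp [hd, (hydir (e j)).1 hq]
      · simp only [hs, hd, if_false, Bool.false_eq_true] at hj
        have hq : q (e j) < 0 := by
          rcases lt_trichotomy (q (e j)) 0 with h | h | h
          · exact h
          · exact absurd h (hnz j)
          · exfalso
            have := hmono (e j) h
            rw [hΦ0] at this; linarith
        simp [hd, (hydir (e j)).2 hq]
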